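/- Let p be an odd prime, m ≥ 1, G = (Z/pZ)^m, x ∈ G, and 1 ≤ k ≤ p^m − 1. Let B_k^x be the family of k-subsets of G summing to x. Then (G, B_k^x) is a 1-design (every point of G lies in the same number of blocks) if and only if p divides k. -/

import Mathlib

open Finset

namespace Stmt12Aux

variable {p m : ℕ} [NeZero p]

lemma map_translate_sum (T : Finset (Fin m → ZMod p)) (c : Fin m → ZMod p) :
    ∑ t ∈ T.map (addRightEmbedding c), t = (∑ t ∈ T, t) + T.card • c := by
  rw [Finset.sum_map]
  simp only [addRightEmbedding_apply]
  rw [Finset.sum_add_distrib, Finset.sum_const]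

lemma map_translate_inv (T : Finset (Fin m → ZMod p)) (c : Fin m → ZMod p) :
    (T.map (addRightEmbedding c)).map (addRightEmbedding (-c)) = T := by
  ext a
  simp only [Finset.mem_map, addRightEmbedding_apply]
  constructor
  · rintro ⟨b, ⟨a', ha', rfl⟩, rfl⟩
    simpa using ha'
  · intro ha
    exact ⟨a + c, ⟨a, ha, rfl⟩, by simp⟩

/-- Translating every element of each block by `c` gives a bijection between blocks with sum `x`
and blocks with sum `x + k • c`, compatible with a distinguished point. -/
lemma card_blocks_translate (k : ℕ) (x c : Fin m → ZMod p) :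
    (univ.filter fun T : Finset (Fin m → ZMod p) => T.card = k ∧ ∑ t ∈ T, t = x).card
      = (univ.filter fun T : Finset (Fin m → ZMod p) =>
          T.card = k ∧ ∑ t ∈ T, t = x + k • c).card := by
  refine Finset.card_nbij' (fun T => T.map (addRightEmbedding c))
      (fun T => T.map (addRightEmbedding (-c))) ?_ ?_ ?_ ?_
  · intro T hT
    simp only [mem_coe, mem_filter, mem_univ, true_and] at hT ⊢
    obtain ⟨h1, h2⟩ := hT
    refine ⟨by simp [h1], ?_⟩
    rw [map_translate_sum, h1, h2]
  · intro T hT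
    simp only [mem_coe, mem_filter, mem_univ, true_and] at hT ⊢
    obtain ⟨h1, h2⟩ := hT
    refine ⟨by simp [h1], ?_⟩
    rw [map_translate_sum, h1, h2, smul_neg, add_assoc, add_neg_cancel, add_zero]
  · intro T _
    exact map_translate_inv T c
  · intro T _
    have := map_translate_inv T (-c)
    rwa [neg_neg] at this

lemma card_blocksThrough_translate (k : ℕ) (x c g : Fin m → ZMod p) :
    (univ.filter fun T : Finset (Fin m → ZMod p) =>
        (T.card = k ∧ ∑ t ∈ T, t = x) ∧ g ∈ T).card
      = (univ.filter fun T : Finset (Fin m → ZMod p) =>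
          (T.card = k ∧ ∑ t ∈ T, t = x + k • c) ∧ g + c ∈ T).card := by
  refine Finset.card_nbij' (fun T => T.map (addRightEmbedding c))
      (fun T => T.map (addRightEmbedding (-c))) ?_ ?_ ?_ ?_
  · intro T hT
    simp only [mem_coe, mem_filter, mem_univ, true_and] at hT ⊢
    obtain ⟨⟨h1, h2⟩, h3⟩ := hT
    refine ⟨⟨by simp [h1], ?_⟩, ?_⟩
    · rw [map_translate_sum, h1, h2]
    · exact Finset.mem_map.2 ⟨g, h3, rfl⟩
  · intro T hT
    simp only [mem_coe, mem_filter, mem_univ, true_and] at hT ⊢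
    obtain ⟨⟨h1, h2⟩, h3⟩ := hT
    refine ⟨⟨by simp [h1], ?_⟩, ?_⟩
    · rw [map_translate_sum, h1, h2, smul_neg, add_assoc, add_neg_cancel, add_zero]
    · exact Finset.mem_map.2 ⟨g + c, h3, by simp [addRightEmbedding_apply]⟩
  · intro T _
    exact map_translate_inv T c
  · intro T _
    have := map_translate_inv T (-c)
    rwa [neg_neg] at this

/-- Binomial coefficients of `p ^ m - 1` are not divisible by `p`. -/
lemma not_dvd_choose_pow_sub_one (hp : p.Prime) {j : ℕ} (hj : j ≤ p ^ m - 1) :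
    ¬ p ∣ (p ^ m - 1).choose j := by
  haveI := Fact.mk hp
  have hq : 1 ≤ p ^ m := Nat.one_le_pow _ _ hp.pos
  have key : ((p ^ m - 1).choose j : ZMod p) = (-1) ^ j := by
    induction j with
    | zero => simp
    | succ j ih =>
      have hj' : j ≤ p ^ m - 1 := Nat.le_of_succ_le hj
      have hsplit : (p ^ m).choose (j + 1)
          = (p ^ m - 1).choose j + (p ^ m - 1).choose (j + 1) := by
        conv_lhs => rw [show p ^ m = (p ^ m - 1) + 1 by omega]
        exact Nat.choose_succ_succ _ j
      have hdvd : p ∣ (p ^ m).choose (j + 1) :=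
        hp.dvd_choose_pow (Nat.succ_ne_zero j) (by omega)
      have h0 : ((p ^ m).choose (j + 1) : ZMod p) = 0 :=
        (ZMod.natCast_eq_zero_iff _ _).mpr hdvd
      have := h0
      rw [hsplit, Nat.cast_add, ih hj'] at this
      have : ((p ^ m - 1).choose (j + 1) : ZMod p) = -(-1) ^ j := by linear_combination this
      rw [this, pow_succ]
      ring
  intro hdvd
  rw [(ZMod.natCast_eq_zero_iff _ _).mpr hdvd] at key
  have : ((-1 : ZMod p) ^ j) ≠ 0 := pow_ne_zero _ (by
    simpa using (neg_ne_zero.2 (one_ne_zero (α := ZMod p))))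
  exact this key.symm

end Stmt12Aux

open Stmt12Aux

/-- (G, B_k^x) with G = (Z/pZ)^m, p an odd prime, is a 1-design iff p ∣ k. -/
theorem stmt_12 (p m : ℕ) (hp : p.Prime) (hodd : Odd p) (hm : 1 ≤ m)
    (x : Fin m → ZMod p) (k : ℕ) (hk1 : 1 ≤ k) (hk2 : k ≤ p ^ m - 1) :
    (∃ r : ℕ, ∀ g : Fin m → ZMod p,
        Nat.card {T : Finset (Fin m → ZMod p) //
          (T.card = k ∧ ∑ t ∈ T, t = x) ∧ g ∈ T} = r)
      ↔ p ∣ k := by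
  haveI := Fact.mk hp
  haveI : NeZero p := ⟨hp.ne_zero⟩
  have hcard : Fintype.card (Fin m → ZMod p) = p ^ m := by
    simp [ZMod.card]
  have hN : ∀ g : Fin m → ZMod p,
      Nat.card {T : Finset (Fin m → ZMod p) // (T.card = k ∧ ∑ t ∈ T, t = x) ∧ g ∈ T}
        = (univ.filter fun T : Finset (Fin m → ZMod p) =>
            (T.card = k ∧ ∑ t ∈ T, t = x) ∧ g ∈ T).card := by
    intro g
    rw [Nat.card_eq_fintype_card, Fintype.card_subtype]
  constructor
  · -- hard direction : 1-design → p ∣ k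
    rintro ⟨r, hr⟩
    by_contra hpk
    have hk0 : (k : ZMod p) ≠ 0 := fun h => hpk ((ZMod.natCast_eq_zero_iff _ _).mp h)
    -- all fibers of the sum map have the same cardinality
    have hfib : ∀ y : Fin m → ZMod p,
        (univ.filter fun T : Finset (Fin m → ZMod p) =>
          T.card = k ∧ ∑ t ∈ T, t = y).card
        = (univ.filter fun T : Finset (Fin m → ZMod p) =>
          T.card = k ∧ ∑ t ∈ T, t = x).card := by
      intro y
      have hkc : k • (((k : ZMod p)⁻¹ • (y - x)) : Fin m → ZMod p) = y - x := by
        funext i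
        simp only [Pi.smul_apply, Pi.sub_apply, smul_eq_mul, nsmul_eq_mul]
        field_simp
      have := card_blocks_translate k x ((k : ZMod p)⁻¹ • (y - x))
      rw [hkc, add_sub_cancel] at this
      exact this.symm
    -- the fibers partition all k-subsets
    have hBsum : (p ^ m) * (univ.filter fun T : Finset (Fin m → ZMod p) =>
        T.card = k ∧ ∑ t ∈ T, t = x).card = (p ^ m).choose k := by
      have h1 : ((univ : Finset (Fin m → ZMod p)).powersetCard k).card
          = (p ^ m).choose k := by
        rw [Finset.card_powersetCard, Finset.card_univ, hcard]
      have h2 : ((univ : Finset (Fin m → ZMod p)).powersetCard k).card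
          = ∑ y : Fin m → ZMod p,
            (((univ : Finset (Fin m → ZMod p)).powersetCard k).filter
              fun T => ∑ t ∈ T, t = y).card :=
        Finset.card_eq_sum_card_fiberwise (fun T _ => mem_univ _)
      have h3 : ∀ y : Fin m → ZMod p,
          (((univ : Finset (Fin m → ZMod p)).powersetCard k).filter
              fun T => ∑ t ∈ T, t = y)
            = univ.filter fun T : Finset (Fin m → ZMod p) =>
                T.card = k ∧ ∑ t ∈ T, t = y := by
        intro y
        ext T
        simp [Finset.mem_powersetCard_univ]
      rw [h2] at h1
      simp_rw [h3, hfib] at h1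
      rw [Finset.sum_const, Finset.card_univ, hcard, smul_eq_mul] at h1
      exact h1
    -- double counting pairs (g, T)
    have hdouble : (p ^ m) * r
        = k * (univ.filter fun T : Finset (Fin m → ZMod p) =>
            T.card = k ∧ ∑ t ∈ T, t = x).card := by
      have h1 : ∑ g : Fin m → ZMod p,
          (univ.filter fun T : Finset (Fin m → ZMod p) =>
            (T.card = k ∧ ∑ t ∈ T, t = x) ∧ g ∈ T).card = (p ^ m) * r := by
        have : ∀ g : Fin m → ZMod p,
            (univ.filter fun T : Finset (Fin m → ZMod p) =>
              (T.card = k ∧ ∑ t ∈ T, t = x) ∧ g ∈ T).card = r := fun g => by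
          rw [← hN g]; exact hr g
        simp_rw [this]
        rw [Finset.sum_const, Finset.card_univ, hcard, smul_eq_mul]
      have h2 : ∑ g : Fin m → ZMod p,
          (univ.filter fun T : Finset (Fin m → ZMod p) =>
            (T.card = k ∧ ∑ t ∈ T, t = x) ∧ g ∈ T).card
          = k * (univ.filter fun T : Finset (Fin m → ZMod p) =>
              T.card = k ∧ ∑ t ∈ T, t = x).card := by
        have step : ∀ g : Fin m → ZMod p,
            (univ.filter fun T : Finset (Fin m → ZMod p) =>
              (T.card = k ∧ ∑ t ∈ T, t = x) ∧ g ∈ T).card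
            = ∑ T ∈ (univ.filter fun T : Finset (Fin m → ZMod p) =>
                T.card = k ∧ ∑ t ∈ T, t = x), if g ∈ T then 1 else 0 := by
          intro g
          rw [← Finset.filter_filter, Finset.card_filter]
        simp_rw [step]
        rw [Finset.sum_comm]
        have inner : ∀ T : Finset (Fin m → ZMod p),
            T ∈ (univ.filter fun T : Finset (Fin m → ZMod p) =>
                T.card = k ∧ ∑ t ∈ T, t = x) →
            ∑ g : Fin m → ZMod p, (if g ∈ T then 1 else 0) = k := by
          intro T hT
          rw [← Finset.card_filter, Finset.filter_univ_mem]
          exact (Finset.mem_filter.mp hT).2.1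
        rw [Finset.sum_congr rfl inner, Finset.sum_const, smul_eq_mul, mul_comm]
      rw [← h1, h2]
    -- combine : p ^ m * r = C(p^m - 1, k - 1)
    have hq1 : 1 ≤ p ^ m := Nat.one_le_pow _ _ hp.pos
    have hid : (p ^ m) * ((p ^ m - 1).choose (k - 1)) = (p ^ m).choose k * k := by
      have := Nat.add_one_mul_choose_eq (p ^ m - 1) (k - 1)
      rwa [
        show p ^ m - 1 + 1 = p ^ m by omega, show k - 1 + 1 = k by omega] at this
    have hfinal : (p ^ m) * ((p ^ m) * r) = (p ^ m) * ((p ^ m - 1).choose (k - 1)) := by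
      rw [hid, hdouble, ← hBsum]; ring
    have hcancel : (p ^ m) * r = (p ^ m - 1).choose (k - 1) :=
      Nat.eq_of_mul_eq_mul_left (by positivity) hfinal
    have : p ∣ (p ^ m - 1).choose (k - 1) := by
      rw [← hcancel]
      exact Dvd.dvd.mul_right (dvd_pow_self p (by omega)) r
    exact not_dvd_choose_pow_sub_one hp (by omega) this
  · -- easy direction : p ∣ k → 1-design
    intro hpk
    refine ⟨Nat.card {T : Finset (Fin m → ZMod p) //
        (T.card = k ∧ ∑ t ∈ T, t = x) ∧ (0 : Fin m → ZMod p) ∈ T}, fun g => ?_⟩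
    rw [hN g, hN 0]
    have hkg : k • g = (0 : Fin m → ZMod p) := by
      funext i
      simp only [Pi.smul_apply, nsmul_eq_mul, Pi.zero_apply]
      rw [(ZMod.natCast_eq_zero_iff _ _).mpr hpk, zero_mul]
    have := card_blocksThrough_translate k x g (0 : Fin m → ZMod p)
    rw [hkg, add_zero, zero_add] at this
    exact this.symm
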